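/- Let x_1^n be a string over {1,...,D} and let s ≥ L(x_1^n), where L denotes the depth. Then for every l with 0 ≤ l ≤ n−1 and every k ≥ s, the adaptive Markov predictors computed along x_1^n satisfy B(x_{l+1}|x_1^l, k) = B(x_{l+1}|x_1^l, s), where counts of substrings whose indices fall outside the string are taken to be zero. -/

import Mathlib

open Filter MeasureTheory
open scoped Topology

/-- Number of occurrences `c(w|z)` of `w` as a substring of `z`. -/
def cnt {D : ℕ} (w z : List (Fin D)) : ℕ :=
  ((List.range (z.length - w.length + 1)).filter
    (fun i => (z.drop i).take w.length = w)).length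

/-- Count `c(w | z_1^{m-1})` of `w` in the string `z` with its last symbol removed,
with the convention that counting in a block of length `-1` (i.e. when `z` itself is
empty) gives `0`. -/
def cntPred {D : ℕ} (w z : List (Fin D)) : ℕ :=
  if z = [] then 0 else cnt w z.dropLast

/-- The prefix `x_1^n` of the one-sided sequence `x` (0-indexed: `x i = x_{i+1}`). -/
def pref {D : ℕ} (x : ℕ → Fin D) (n : ℕ) : List (Fin D) :=
  (List.range n).map x

/-- Adaptive Markov predictor: the natural-number index corresponds to the Markov
order shifted by one, so `Bpred D xs a (k+1) = B(a | xs, k)` and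
`Bpred D xs a 0 = B(a | xs, -1) = 1/D`, where
`B(x_{n+1}|x_1^n, k) = (c(x_{n+1-k}^{n+1}|x_1^n) + B(x_{n+1}|x_1^n, k-1)) /
(c(x_{n+1-k}^{n}|x_1^{n-1}) + 1)`.  Counts of substrings whose indices fall outside
the string are taken to be zero. -/
noncomputable def Bpred (D : ℕ) (xs : List (Fin D)) (a : Fin D) : ℕ → ℝ
  | 0 => 1 / D
  | k + 1 =>
    if k ≤ xs.length then
      ((cnt (xs.drop (xs.length - k) ++ [a]) xs : ℝ) + Bpred D xs a k) /
      ((cntPred (xs.drop (xs.length - k)) xs : ℝ) + 1)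
    else Bpred D xs a k

/-- The depth `L(z)`: maximal length of a substring occurring at least twice in `z`
(`0` if there is none). -/
noncomputable def depth {D : ℕ} (z : List (Fin D)) : ℕ :=
  sSup {k | ∃ w : List (Fin D), w.length = k ∧ 2 ≤ cnt w z}

/-- An occurrence forces the window to fit inside the string. -/
lemma occ_bound {D : ℕ} {w z : List (Fin D)} {i : ℕ} (hw : w ≠ [])
    (h : (z.drop i).take w.length = w) : i + w.length ≤ z.length := by
  have hl : ((z.drop i).take w.length).length = w.length := by rw [h]
  simp only [List.length_take, List.length_drop] at hl
  have hpos : 0 < w.length := List.length_pos_iff.2 hw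
  omega

lemma cnt_eq_zero {D : ℕ} {w z : List (Fin D)}
    (h : ∀ i, ¬ (z.drop i).take w.length = w) : cnt w z = 0 := by
  unfold cnt
  rw [List.length_eq_zero_iff, List.filter_eq_nil_iff]
  intro a _
  simpa using h a

lemma two_le_filter_length {p : ℕ → Bool} {m i j : ℕ} (hij : i ≠ j)
    (hi : i ∈ (List.range m).filter p) (hj : j ∈ (List.range m).filter p) :
    2 ≤ ((List.range m).filter p).length := by
  classical
  have hnd : ((List.range m).filter p).Nodup := List.nodup_range.filter p
  rw [← List.toFinset_card_of_nodup hnd]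
  exact Finset.one_lt_card.2
    ⟨i, List.mem_toFinset.2 hi, j, List.mem_toFinset.2 hj, hij⟩

lemma two_le_cnt {D : ℕ} {w z : List (Fin D)} (hw : w ≠ []) {i j : ℕ} (hij : i ≠ j)
    (hi : (z.drop i).take w.length = w) (hj : (z.drop j).take w.length = w) :
    2 ≤ cnt w z := by
  have hpos : 0 < w.length := List.length_pos_iff.2 hw
  have hmem : ∀ m, (z.drop m).take w.length = w →
      m ∈ (List.range (z.length - w.length + 1)).filter
        (fun i => (z.drop i).take w.length = w) := by
    intro m hm
    refine List.mem_filter.2 ⟨List.mem_range.2 ?_, by simpa using hm⟩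
    have := occ_bound hw hm
    omega
  unfold cnt
  exact two_le_filter_length hij (hmem i hi) (hmem j hj)

/-- An occurrence in a prefix is an occurrence in the whole string. -/
lemma occ_of_take {D : ℕ} {w z : List (Fin D)} {m i : ℕ}
    (h : ((z.take m).drop i).take w.length = w) : (z.drop i).take w.length = w := by
  rw [List.drop_take, List.take_take] at h
  have hl : (((z.drop i)).take (w.length ⊓ (m - i))).length = w.length := by rw [h]
  simp only [List.length_take, List.length_drop] at hl
  have hmin : w.length ⊓ (m - i) = w.length := by omega
  rwa [hmin] at h

lemma len_le_depth {D : ℕ} {w z : List (Fin D)} (h : 2 ≤ cnt w z) :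
    w.length ≤ depth z := by
  rcases eq_or_ne w [] with rfl | hw
  · simp [depth]
  · have hb : BddAbove {k | ∃ w : List (Fin D), w.length = k ∧ 2 ≤ cnt w z} := by
      refine ⟨z.length, ?_⟩
      rintro k ⟨v, rfl, hv⟩
      rcases eq_or_ne v [] with rfl | hv0
      · simp
      · have hpos : 0 < cnt v z := by omega
        unfold cnt at hpos
        rw [List.length_pos_iff] at hpos
        obtain ⟨i, himem⟩ := List.exists_mem_of_ne_nil _ hpos
        have hocc : (z.drop i).take v.length = v := by
          simpa using (List.mem_filter.1 himem).2
        have := occ_bound hv0 hocc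
        omega
    exact le_csSup hb ⟨w, rfl, h⟩

lemma pref_take {D : ℕ} (x : ℕ → Fin D) {l n : ℕ} (h : l ≤ n) :
    pref x l = (pref x n).take l := by
  unfold pref
  rw [← List.map_take, List.take_range, Nat.min_eq_left h]

lemma pref_length {D : ℕ} (x : ℕ → Fin D) (l : ℕ) : (pref x l).length = l := by
  simp [pref]

/-- Let `x_1^n` be a string over `{1,...,D}` and `s ≥ L(x_1^n)`, where `L` denotes the
depth. Then for every `l` with `0 ≤ l ≤ n−1` and every `k ≥ s`, the adaptive Markov
predictors computed along `x_1^n` satisfy `B(x_{l+1}|x_1^l, k) = B(x_{l+1}|x_1^l, s)`. -/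
theorem predictor_stabilizes_above_depth
    (D : ℕ) (hD : 2 ≤ D) (n : ℕ) (x : ℕ → Fin D) (s : ℕ)
    (hs : depth (pref x n) ≤ s) :
    ∀ l < n, ∀ k : ℕ, s ≤ k →
      Bpred D (pref x l) (x l) (k + 1) = Bpred D (pref x l) (x l) (s + 1) := by
  intro l hln k hk
  induction k, hk using Nat.le_induction with
  | base => rfl
  | succ k hk ih =>
    rw [← ih]
    set xs := pref x l with hxs
    set a := x l
    have hxl : xs.length = l := pref_length x l
    by_cases hkl : k + 1 ≤ l
    · -- the interesting case: the window fits
      have hxs_take : xs = (pref x n).take l := pref_take x (le_of_lt hln)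
      set w := xs.drop (xs.length - (k + 1)) with hw
      have hwlen : w.length = k + 1 := by
        rw [hw, List.length_drop, hxl]; omega
      have hwne : w ≠ [] := by
        intro h; rw [h] at hwlen; simp at hwlen
      have hocc0 : (xs.drop (l - (k + 1))).take w.length = w := by
        have hlen2 : w.length = (xs.drop (l - (k + 1))).length := by
          rw [hwlen, List.length_drop, hxl]; omega
        rw [hlen2, List.take_length, hw, hxl]
      have huniq : ∀ i, (xs.drop i).take w.length = w → i = l - (k + 1) := by
        intro i hi
        by_contra hne
        have h2 : 2 ≤ cnt w (pref x n) := by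
          refine two_le_cnt hwne hne ?_ ?_
          · exact occ_of_take (by rw [← hxs_take]; exact hi)
          · exact occ_of_take (by rw [← hxs_take]; exact hocc0)
        have := len_le_depth h2
        rw [hwlen] at this
        omega
      have hc1 : cnt (w ++ [a]) xs = 0 := by
        apply cnt_eq_zero
        intro i hcontra
        have hb := occ_bound (by simp) hcontra
        rw [List.length_append, hwlen] at hb
        simp only [List.length_singleton, hxl] at hb
        have hocc : (xs.drop i).take w.length = w := by
          have h' := congrArg (List.take w.length) hcontra
          rw [List.take_take, Nat.min_eq_left (by simp [List.length_append])] at h'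
          rw [h', List.take_left]
        have := huniq i hocc
        omega
      have hc2 : cntPred w xs = 0 := by
        have hxsne : xs ≠ [] := by
          intro h; rw [h] at hxl; simp at hxl; omega
        rw [cntPred, if_neg hxsne]
        apply cnt_eq_zero
        intro i hcontra
        have hb := occ_bound hwne hcontra
        rw [List.length_dropLast, hwlen, hxl] at hb
        have hocc : (xs.drop i).take w.length = w := by
          rw [List.dropLast_eq_take] at hcontra
          exact occ_of_take hcontra
        have := huniq i hocc
        omega
      show Bpred D xs a (k + 1 + 1) = Bpred D xs a (k + 1)
      rw [Bpred, if_pos (by rw [hxl]; exact hkl), ← hw, hc1, hc2]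
      simp
    · show Bpred D xs a (k + 1 + 1) = Bpred D xs a (k + 1)
      rw [Bpred, if_neg (by rw [hxl]; omega)]
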